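/- Let G be a strongly connected directed graph on n ≥ 1 vertices with a self-loop at every vertex, and let s be a vertex. Then over any field F with at least n+1 elements, there exists a matrix A consistent with G (A_{ij} = 0 whenever (j,i) is not an edge of G) such that the controllability matrix [e_s | A e_s | … | A^{n-1} e_s] is invertible. -/

import Mathlib

open Matrix

open Polynomial

lemma exists_depth_par {n : ℕ} (E : Fin n → Fin n → Prop) (s : Fin n)
    (hconn : ∀ v : Fin n, Relation.ReflTransGen E s v) :
    ∃ (depth : Fin n → ℕ) (par : Fin n → Fin n),
      depth s = 0 ∧ (∀ v, depth v = 0 → v = s) ∧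
      (∀ v, v ≠ s → E (par v) v ∧ depth (par v) + 1 = depth v) ∧
      (∀ v, depth v < n) := by
  classical
  set P : Fin n → ℕ → Prop := fun v k =>
    ∃ g : ℕ → Fin n, g 0 = s ∧ g k = v ∧ ∀ i < k, E (g i) (g (i + 1)) with hPdef
  have hex : ∀ v, ∃ k, P v k := by
    intro v
    induction hconn v with
    | refl => exact ⟨0, fun _ => s, rfl, rfl, by omega⟩
    | @tail b c h e ih =>
      obtain ⟨k, g, hg0, hgk, hchain⟩ := ih
      refine ⟨k + 1, fun i => if i = k + 1 then c else g i, by simp [hg0], by simp, ?_⟩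
      intro i hi
      dsimp only
      simp only [Nat.ne_of_lt hi, if_false]
      rcases Nat.lt_or_ge i k with h' | h'
      · rw [if_neg (by omega)]; exact hchain i h'
      · have : i = k := by omega
        subst this
        rw [if_pos rfl, hgk]; exact e
  let depth : Fin n → ℕ := fun v => Nat.find (hex v)
  have hds : depth s = 0 := by
    rw [Nat.find_eq_zero]
    exact ⟨fun _ => s, rfl, rfl, by omega⟩
  have hzero : ∀ v, depth v = 0 → v = s := by
    intro v hv
    have h := Nat.find_spec (hex v)
    rw [show Nat.find (hex v) = depth v from rfl, hv] at h
    obtain ⟨g, hg0, hgk, -⟩ := h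
    rw [← hgk, hg0]
  have hparstep : ∀ v, v ≠ s → ∃ u, E u v ∧ depth u + 1 = depth v := by
    intro v hv
    have hk : depth v ≠ 0 := fun h => hv (hzero v h)
    obtain ⟨k', hk'⟩ : ∃ k', depth v = k' + 1 := ⟨depth v - 1, by omega⟩
    have h := Nat.find_spec (hex v)
    rw [show Nat.find (hex v) = depth v from rfl, hk'] at h
    obtain ⟨g, hg0, hgk, hchain⟩ := h
    refine ⟨g k', hgk ▸ hchain k' (by omega), ?_⟩
    have hle : depth (g k') ≤ k' := Nat.find_le ⟨g, hg0, rfl, fun i hi => hchain i (by omega)⟩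
    have hge : depth v ≤ depth (g k') + 1 := by
      obtain ⟨g₂, hg₂0, hg₂k, hchain₂⟩ := Nat.find_spec (hex (g k'))
      refine Nat.find_le ⟨fun i => if i = depth (g k') + 1 then v else g₂ i, by simp [hg₂0], by simp, ?_⟩
      intro i hi
      dsimp only
      rw [if_neg (by omega)]
      rcases Nat.lt_or_ge i (depth (g k')) with h' | h'
      · rw [if_neg (by omega)]; exact hchain₂ i h'
      · have : i = depth (g k') := by omega
        subst this
        rw [if_pos rfl, hg₂k]
        exact hgk ▸ hchain k' (by omega)
    omega
  let par : Fin n → Fin n := fun v => if h : v = s then s else Classical.choose (hparstep v h)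
  have hpar : ∀ v, v ≠ s → E (par v) v ∧ depth (par v) + 1 = depth v := by
    intro v hv
    have := Classical.choose_spec (hparstep v hv)
    simpa [par, dif_neg hv] using this
  refine ⟨depth, par, hds, hzero, hpar, ?_⟩
  intro v
  have hiter : ∀ j, j ≤ depth v → depth (par^[j] v) = depth v - j := by
    intro j
    induction j with
    | zero => simp
    | succ j ih =>
      intro hj
      have h1 : depth (par^[j] v) = depth v - j := ih (by omega)
      have hne : par^[j] v ≠ s := by
        intro h
        rw [h, hds] at h1
        omega
      have := (hpar _ hne).2
      rw [Function.iterate_succ_apply']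
      omega
  have hinj : Function.Injective (fun j : Fin (depth v + 1) => par^[j.1] v) := by
    intro a b hab
    have ha := hiter a.1 (by omega)
    have hb := hiter b.1 (by omega)
    simp only at hab
    rw [hab] at ha
    have : a.1 = b.1 := by omega
    exact Fin.ext this
  have := Fintype.card_le_of_injective _ hinj
  simpa using this

open Matrix Polynomial

lemma iter_par_depth {n : ℕ} (s : Fin n) (depth : Fin n → ℕ) (par : Fin n → Fin n)
    (hds : depth s = 0)
    (hstep : ∀ v, v ≠ s → depth (par v) + 1 = depth v) :
    ∀ (k : ℕ) (x : Fin n), k ≤ depth x → depth (par^[k] x) = depth x - k := by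
  intro k
  induction k with
  | zero => intro x _; simp
  | succ k ih =>
    intro x hk
    have h1 : depth (par^[k] x) = depth x - k := ih x (by omega)
    have hne : par^[k] x ≠ s := by
      intro h
      rw [h, hds] at h1
      omega
    have := hstep _ hne
    rw [Function.iterate_succ_apply']
    omega

lemma key {n : ℕ} {F : Type*} [Field F] (lam : Fin n → F) (hlam : Function.Injective lam)
    (s : Fin n) (depth : Fin n → ℕ) (par : Fin n → Fin n)
    (hds : depth s = 0) (hzero : ∀ v, depth v = 0 → v = s)
    (hstep : ∀ v, v ≠ s → depth (par v) + 1 = depth v)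
    (hlt : ∀ v, depth v < n)
    (A : Matrix (Fin n) (Fin n) F)
    (hA : ∀ u v, A u v = if u = v then lam u else if u ≠ s ∧ par u = v then 1 else 0) :
    Submodule.span F (Set.range fun k : ℕ => (A ^ k) *ᵥ Pi.single s (1 : F)) = ⊤ := by
  classical
  have hiter := iter_par_depth s depth par hds hstep
  have hparne : ∀ v, v ≠ s → par v ≠ v := by
    intro v hv h
    have := hstep v hv
    rw [h] at this
    omega
  set children : Fin n → Finset (Fin n) :=
    fun u => Finset.univ.filter (fun x => x ≠ s ∧ par x = u) with hchil
  have hcd : ∀ u x, x ∈ children u → depth x = depth u + 1 := by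
    intro u x hx
    rw [hchil, Finset.mem_filter] at hx
    obtain ⟨-, hxs, hxp⟩ := hx
    have := hstep x hxs
    rw [hxp] at this
    omega
  -- structural lemma (1)
  have hsub : ∀ u, (A - lam u • 1) *ᵥ Pi.single u (1:F) = ∑ c ∈ children u, Pi.single c (1:F) := by
    intro u
    funext x
    have h1 : ((A - lam u • 1) *ᵥ Pi.single u (1:F)) x
        = A x u - lam u * (if x = u then 1 else 0) := by
      rw [sub_mulVec, mulVec_single, smul_mulVec, one_mulVec]
      simp [Pi.single_apply]
    rw [h1, hA]
    rw [Finset.sum_apply]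
    have h2 : ∀ c : Fin n, (Pi.single c (1:F) : Fin n → F) x = if x = c then (1:F) else 0 := by
      intro c; simp [Pi.single_apply]
    rw [Finset.sum_congr rfl (fun c _ => h2 c),
      Finset.sum_ite_eq (Finset.univ.filter (fun y => y ≠ s ∧ par y = u)) x (fun _ => (1:F))]
    by_cases hxu : x = u
    · have hnm : u ∉ Finset.univ.filter (fun y => y ≠ s ∧ par y = u) := by
        simp only [Finset.mem_filter, Finset.mem_univ, true_and, not_and]
        intro hus
        exact hparne u hus
      simp [hxu, hnm]
    · simp only [if_neg hxu, mul_zero, sub_zero]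
      by_cases hm : x ∈ Finset.univ.filter (fun y => y ≠ s ∧ par y = u)
      · rw [if_pos hm, if_pos]
        simpa using hm
      · rw [if_neg hm, if_neg]
        simpa using hm
  -- structural lemma (2)
  have htrans : ∀ (ψ : Fin n → F) (u : Fin n),
      (Aᵀ *ᵥ ψ) u = lam u * ψ u + ∑ x ∈ children u, ψ x := by
    intro ψ u
    have h1 : (Aᵀ *ᵥ ψ) u = ∑ x, A x u * ψ x := by
      simp [mulVec, dotProduct, transpose_apply, mul_comm]
    rw [h1]
    have h2 : ∀ x : Fin n, A x u * ψ x =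
        (if x = u then lam u * ψ x else 0) + (if x ≠ s ∧ par x = u then ψ x else 0) := by
      intro x
      rw [hA]
      by_cases hxu : x = u
      · have : ¬(x ≠ s ∧ par x = u) := by
          rintro ⟨hxs, hpx⟩
          exact hparne x hxs (hxu ▸ hpx)
        rw [if_pos hxu, if_pos hxu, if_neg this, add_zero, hxu]
      · rw [if_neg hxu, if_neg hxu, zero_add]
        by_cases hc : x ≠ s ∧ par x = u
        · rw [if_pos hc, if_pos hc, one_mul]
        · rw [if_neg hc, if_neg hc, zero_mul]
    rw [Finset.sum_congr rfl (fun x _ => h2 x), Finset.sum_add_distrib,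
      Finset.sum_ite_eq' Finset.univ u (fun x => lam u * ψ x), if_pos (Finset.mem_univ u),
      ← Finset.sum_filter]
  -- the vanishing polynomial
  set Qd : ℕ → F[X] :=
    fun d => ∏ v ∈ Finset.univ.filter (fun v => d ≤ depth v), (X - C (lam v)) with hQd
  have claim : ∀ j d u, n ≤ d + j → d ≤ depth u →
      (aeval A (Qd d)) *ᵥ Pi.single u (1:F) = 0 := by
    intro j
    induction j with
    | zero =>
      intro d u hnd hdu
      exact absurd (hlt u) (by omega)
    | succ j ih =>
      intro d u hnd hdu
      rcases eq_or_lt_of_le hdu with heq | hlt'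
      · have hu_mem : u ∈ Finset.univ.filter (fun v => d ≤ depth v) :=
          Finset.mem_filter.mpr ⟨Finset.mem_univ u, hdu⟩
        have hsub2 : Finset.univ.filter (fun v => d + 1 ≤ depth v) ⊆
            (Finset.univ.filter (fun v => d ≤ depth v)).erase u := by
          intro x hx
          rw [Finset.mem_filter] at hx
          refine Finset.mem_erase.mpr ⟨?_, Finset.mem_filter.mpr ⟨Finset.mem_univ x, by omega⟩⟩
          intro h
          rw [h] at hx
          omega
        obtain ⟨P, hP⟩ := Finset.prod_dvd_prod_of_subset _ _ (fun v => X - C (lam v)) hsub2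
        have h2 : Qd d = P * Qd (d + 1) * (X - C (lam u)) := by
          rw [hQd]
          dsimp only
          rw [← Finset.mul_prod_erase _ _ hu_mem, hP]
          ring
        rw [h2, _root_.map_mul, _root_.map_mul, ← mulVec_mulVec, ← mulVec_mulVec]
        have h3 : aeval A (X - C (lam u)) = A - lam u • 1 := by
          rw [map_sub, aeval_X, aeval_C, Algebra.algebraMap_eq_smul_one]
        rw [h3, hsub u]
        have h4 : aeval A (Qd (d+1)) *ᵥ (∑ c ∈ children u, Pi.single c (1:F)) = 0 := by
          rw [← mulVecLin_apply, map_sum]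
          refine Finset.sum_eq_zero (fun c hc => ?_)
          rw [mulVecLin_apply]
          exact ih (d+1) c (by omega) (by rw [hcd u c hc]; omega)
        rw [h4, mulVec_zero]
      · have hsub1 : Finset.univ.filter (fun v => d + 1 ≤ depth v) ⊆
            Finset.univ.filter (fun v => d ≤ depth v) := by
          intro x hx
          rw [Finset.mem_filter] at hx ⊢
          exact ⟨hx.1, by omega⟩
        obtain ⟨P, hP⟩ := Finset.prod_dvd_prod_of_subset _ _ (fun v => X - C (lam v)) hsub1
        have h2 : Qd d = P * Qd (d + 1) := by
          rw [hQd]; dsimp only; rw [hP]; ring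
        rw [h2, _root_.map_mul, ← mulVec_mulVec, ih (d+1) u (by omega) (by omega), mulVec_zero]
  have hq0 : aeval A (Qd 0) = 0 := by
    ext i j
    have := congrFun (claim n 0 j (by omega) (Nat.zero_le _)) i
    rw [mulVec_single] at this
    simpa using this
  have haevalT : ∀ p : F[X], aeval Aᵀ p = (aeval A p)ᵀ := by
    intro p
    induction p using Polynomial.induction_on' with
    | add p q hp hq => rw [map_add, map_add, hp, hq, transpose_add]
    | monomial k a =>
      rw [aeval_monomial, aeval_monomial, Algebra.algebraMap_eq_smul_one,
        smul_one_mul, smul_one_mul, transpose_smul, transpose_pow]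
  have hqT : aeval Aᵀ (∏ v : Fin n, (X - C (lam v))) = 0 := by
    have h2 : Finset.univ.filter (fun v : Fin n => 0 ≤ depth v) = Finset.univ := by
      apply Finset.filter_true_of_mem; intro x _; omega
    have : (∏ v : Fin n, (X - C (lam v))) = Qd 0 := by
      rw [hQd]; dsimp only; rw [h2]
    rw [this, haevalT, hq0, transpose_zero]
  -- main argument
  by_contra hK
  set K := Submodule.span F (Set.range fun k : ℕ => (A ^ k) *ᵥ Pi.single s (1 : F)) with hKdef
  obtain ⟨x, hx⟩ : ∃ x, x ∉ K := by
    by_contra h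
    push_neg at h
    exact hK (Submodule.eq_top_iff'.mpr h)
  obtain ⟨f, hfx, hfmap⟩ := Submodule.exists_dual_map_eq_bot_of_notMem hx inferInstance
  have hfK : ∀ y ∈ K, f y = 0 := by
    intro y hy
    have : f y ∈ K.map f := Submodule.mem_map_of_mem hy
    rwa [hfmap, Submodule.mem_bot] at this
  set φ₀ : Fin n → F := fun v => f (Pi.single v 1) with hφ₀
  have hdot : ∀ y : Fin n → F, φ₀ ⬝ᵥ y = f y := by
    intro y
    have hy : y = ∑ v, Pi.single v (y v) := by
      funext x
      rw [Finset.sum_apply]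
      simp [Pi.single_apply]
    conv_rhs => rw [hy]
    rw [map_sum, dotProduct]
    refine Finset.sum_congr rfl (fun v _ => ?_)
    have hsingle : Pi.single v (y v) = (y v) • (Pi.single v (1:F) : Fin n → F) := by
      funext x
      simp [Pi.single_apply]
    rw [hsingle, _root_.map_smul, smul_eq_mul, hφ₀, mul_comm]
  have hφ₀ne : φ₀ ≠ 0 := by
    intro h
    apply hfx
    rw [← hdot x, h, zero_dotProduct]
  have hφ₀U : ∀ k : ℕ, φ₀ ⬝ᵥ ((A ^ k) *ᵥ Pi.single s (1 : F)) = 0 := by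
    intro k
    rw [hdot]
    exact hfK _ (Submodule.subset_span ⟨k, rfl⟩)
  set ψseq : ℕ → (Fin n → F) := fun i =>
    Nat.rec φ₀ (fun i ψ => if h : i < n then Aᵀ *ᵥ ψ - lam ⟨i, h⟩ • ψ else ψ) i with hψseq
  have hψ0 : ψseq 0 = φ₀ := rfl
  have hψsucc : ∀ i (h : i < n), ψseq (i + 1) = Aᵀ *ᵥ ψseq i - lam ⟨i, h⟩ • ψseq i := by
    intro i h
    simp only [hψseq, dif_pos h]
  have hU : ∀ i, ∀ k : ℕ, ψseq i ⬝ᵥ ((A ^ k) *ᵥ Pi.single s (1 : F)) = 0 := by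
    intro i
    induction i with
    | zero => exact hφ₀U
    | succ i ih =>
      intro k
      by_cases h : i < n
      · rw [hψsucc i h, sub_dotProduct, smul_dotProduct, ih, smul_zero, sub_zero,
          mulVec_transpose, ← dotProduct_mulVec, mulVec_mulVec, ← pow_succ']
        exact ih (k+1)
      · have : ψseq (i+1) = ψseq i := by simp only [hψseq, dif_neg h]
        rw [this]; exact ih k
  have hψn : ψseq n = 0 := by
    have hkey : ∀ i, i ≤ n → ψseq i =
        (aeval Aᵀ (∏ v ∈ Finset.univ.filter (fun v : Fin n => (v:ℕ) < i),
          (X - C (lam v)))) *ᵥ φ₀ := by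
      intro i
      induction i with
      | zero =>
        intro _
        have : Finset.univ.filter (fun v : Fin n => (v:ℕ) < 0) = ∅ := by
          apply Finset.filter_false_of_mem; intro x _; omega
        rw [hψ0, this, Finset.prod_empty, _root_.map_one, one_mulVec]
      | succ i ih =>
        intro hi
        have h : i < n := by omega
        have hfs : Finset.univ.filter (fun v : Fin n => (v:ℕ) < i + 1) =
            insert ⟨i, h⟩ (Finset.univ.filter (fun v : Fin n => (v:ℕ) < i)) := by
          ext v
          simp only [Finset.mem_filter, Finset.mem_univ, true_and, Finset.mem_insert]
          constructor
          · intro hv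
            rcases Nat.lt_or_ge (v:ℕ) i with h' | h'
            · exact Or.inr h'
            · exact Or.inl (by ext; simp; omega)
          · rintro (rfl | hv)
            · simp
            · omega
        have hnm : (⟨i, h⟩ : Fin n) ∉ Finset.univ.filter (fun v : Fin n => (v:ℕ) < i) := by
          simp
        rw [hψsucc i h, ih (by omega), hfs, Finset.prod_insert hnm, _root_.map_mul,
          ← mulVec_mulVec, map_sub, aeval_X, aeval_C, Algebra.algebraMap_eq_smul_one,
          sub_mulVec, smul_mulVec, one_mulVec]
    have h1 := hkey n le_rfl
    have h2 : Finset.univ.filter (fun v : Fin n => (v:ℕ) < n) = Finset.univ := by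
      apply Finset.filter_true_of_mem; intro x _; exact x.2
    rw [h1, h2, hqT, zero_mulVec]
  have hfind : ∀ m : ℕ, ψseq m = 0 → ∃ i < m, ψseq i ≠ 0 ∧ ψseq (i + 1) = 0 := by
    intro m
    induction m with
    | zero => intro h; exact absurd (hψ0 ▸ h) hφ₀ne
    | succ m ih =>
      intro h
      by_cases hm : ψseq m = 0
      · obtain ⟨i, hi, h1, h2⟩ := ih hm
        exact ⟨i, by omega, h1, h2⟩
      · exact ⟨m, by omega, hm, h⟩
  obtain ⟨i, hi, hne, hz⟩ := hfind n hψn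
  set w : Fin n := ⟨i, hi⟩ with hw
  have heig : Aᵀ *ᵥ ψseq i = lam w • ψseq i := by
    have := hψsucc i hi
    rw [hz] at this
    exact (sub_eq_zero.mp this.symm)
  set ψ : Fin n → F := ψseq i with hψdef
  have hψs : ψ s = 0 := by
    have := hU i 0
    rwa [pow_zero, one_mulVec, dotProduct_single, mul_one] at this
  -- combinatorial contradiction
  have heq : ∀ u, lam u * ψ u + ∑ x ∈ children u, ψ x = lam w * ψ u := by
    intro u
    have := congrFun heig u
    rw [htrans ψ u] at this
    simpa using this
  obtain ⟨u₀, hu₀mem, hu₀max⟩ := Finset.exists_max_image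
    (Finset.univ.filter (fun x => ψ x ≠ 0)) depth (by
      obtain ⟨v, hv⟩ := Function.ne_iff.mp hne
      exact ⟨v, Finset.mem_filter.mpr ⟨Finset.mem_univ v, hv⟩⟩)
  rw [Finset.mem_filter] at hu₀mem
  set m := depth u₀ with hm
  have hmax : ∀ x, ψ x ≠ 0 → depth x ≤ m := by
    intro x hx
    exact hu₀max x (Finset.mem_filter.mpr ⟨Finset.mem_univ x, hx⟩)
  have htop : ∀ u, ψ u ≠ 0 → depth u = m → u = w := by
    intro u hu hdu
    have hch : ∀ x ∈ children u, ψ x = 0 := by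
      intro x hx
      by_contra hψx
      have := hmax x hψx
      have := hcd u x hx
      omega
    have h1 := heq u
    rw [Finset.sum_eq_zero hch, add_zero] at h1
    exact hlam (mul_right_cancel₀ hu h1)
  have hwu : u₀ = w := htop u₀ hu₀mem.2 rfl
  have hψw : ψ w ≠ 0 := hwu ▸ hu₀mem.2
  have hdw : depth w = m := by rw [← hwu]
  have hanc : ∀ j u, ψ u ≠ 0 → m ≤ depth u + j → ∃ k, k + depth u = m ∧ par^[k] w = u := by
    intro j
    induction j with
    | zero =>
      intro u hu hju
      have : depth u = m := le_antisymm (hmax u hu) (by omega)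
      exact ⟨0, by omega, (htop u hu this).symm ▸ rfl⟩
    | succ j ih =>
      intro u hu hju
      by_cases h : m ≤ depth u + j
      · exact ih u hu h
      · by_cases hch : ∀ x ∈ children u, ψ x = 0
        · have h1 := heq u
          rw [Finset.sum_eq_zero hch, add_zero] at h1
          have : u = w := hlam (mul_right_cancel₀ hu h1)
          subst this
          omega
        · push_neg at hch
          obtain ⟨c, hc, hψc⟩ := hch
          have hdc : depth c = depth u + 1 := hcd u c hc
          obtain ⟨k, hk, hpk⟩ := ih c hψc (by omega)
          refine ⟨k + 1, by omega, ?_⟩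
          rw [Function.iterate_succ_apply', hpk]
          rw [hchil] at hc
          simp only [Finset.mem_filter] at hc
          exact hc.2.2
  have hup : ∀ k, k ≤ m → ψ (par^[k] w) ≠ 0 := by
    intro k
    induction k with
    | zero => intro _; simpa using hψw
    | succ k ih =>
      intro hk
      set u := par^[k] w with hu
      have hψu : ψ u ≠ 0 := ih (by omega)
      have hdu : depth u = m - k := by
        rw [hu]; rw [hiter k w (by omega)]; omega
      have hus : u ≠ s := by
        intro h
        rw [h, hds] at hdu
        omega
      set u' := par u with hu'
      have hdu' : depth u' = m - (k + 1) := by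
        have := hiter (k+1) w (by omega)
        rw [Function.iterate_succ_apply', ← hu, ← hu'] at this
        omega
      have humem : u ∈ children u' := by
        rw [hchil]
        exact Finset.mem_filter.mpr ⟨Finset.mem_univ u, hus, rfl⟩
      have hsum : ∑ x ∈ children u', ψ x = ψ u := by
        refine Finset.sum_eq_single_of_mem u humem (fun x hx hxu => ?_)
        by_contra hψx
        obtain ⟨k', hk', hpk'⟩ := hanc m x hψx (by omega)
        have hdx : depth x = depth u' + 1 := hcd u' x hx
        have : k' = k := by omega
        subst this
        exact hxu (by rw [← hpk', hu])
      have h1 := heq u'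
      rw [hsum] at h1
      have h2 : ψ u = (lam w - lam u') * ψ u' := by linear_combination h1
      rw [Function.iterate_succ_apply', ← hu, ← hu']
      intro h
      rw [h, mul_zero] at h2
      exact hψu h2
  have hfin := hup m le_rfl
  have : depth (par^[m] w) = 0 := by
    rw [hiter m w (by omega)]; omega
  rw [hzero _ this] at hfin
  exact hfin hψs

lemma ctrl_isUnit {n : ℕ} {F : Type*} [Field F] (s : Fin n)
    (A : Matrix (Fin n) (Fin n) F)
    (hspan : Submodule.span F (Set.range fun k : ℕ => (A ^ k) *ᵥ Pi.single s (1 : F)) = ⊤) :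
    IsUnit (Matrix.of fun a b : Fin n => ((A ^ (b : ℕ)) *ᵥ Pi.single s (1 : F)) a) := by
  classical
  have hn : 0 < n := s.pos
  set K' := Submodule.span F (Set.range fun b : Fin n => (A ^ (b:ℕ)) *ᵥ Pi.single s (1 : F))
    with hK'
  -- Cayley-Hamilton step
  set r : F[X] := X ^ n - A.charpoly with hr
  have hAn : A ^ n = aeval A r := by
    rw [hr, map_sub, Matrix.aeval_self_charpoly, sub_zero, map_pow, aeval_X]
  have hrdeg : r.natDegree < n := by
    by_cases h0 : r = 0
    · rw [h0]; simpa using hn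
    · have hd : r.degree < (n : ℕ) := by
        rw [hr]
        apply lt_of_lt_of_le (Polynomial.degree_sub_lt ?_ ?_ ?_) ?_
        · rw [Matrix.charpoly_degree_eq_dim, Fintype.card_fin, Polynomial.degree_X_pow]
        · exact pow_ne_zero n X_ne_zero
        · rw [Polynomial.leadingCoeff_X_pow, (Matrix.charpoly_monic A).leadingCoeff]
        · rw [Polynomial.degree_X_pow]
      exact (Polynomial.natDegree_lt_iff_degree_lt h0).mpr hd
  have hmem : ∀ k : ℕ, (A ^ k) *ᵥ Pi.single s (1 : F) ∈ K' := by
    intro k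
    induction k using Nat.strong_induction_on with
    | _ k ih =>
      by_cases hk : k < n
      · exact Submodule.subset_span ⟨⟨k, hk⟩, rfl⟩
      · push_neg at hk
        have hAk : A ^ k = aeval A (X ^ (k - n) * r) := by
          rw [_root_.map_mul, map_pow, aeval_X, ← hAn, ← pow_add]
          congr 1
          omega
        have hdeg : (X ^ (k - n) * r).natDegree < k := by
          calc (X ^ (k - n) * r).natDegree ≤ (X ^ (k-n) : F[X]).natDegree + r.natDegree :=
                Polynomial.natDegree_mul_le
            _ ≤ (k - n) + r.natDegree := by rw [Polynomial.natDegree_X_pow]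
            _ < k := by omega
        have hsum : ∀ (t : Finset ℕ) (f : ℕ → Matrix (Fin n) (Fin n) F) (x : Fin n → F),
            (∑ i ∈ t, f i) *ᵥ x = ∑ i ∈ t, f i *ᵥ x := by
          intro t f x
          induction t using Finset.induction_on with
          | empty => simp [Matrix.zero_mulVec]
          | insert _ _ hnotmem ih2 => rw [Finset.sum_insert hnotmem, Finset.sum_insert hnotmem,
              Matrix.add_mulVec, ih2]
        rw [hAk, aeval_eq_sum_range, hsum]
        refine Submodule.sum_mem _ (fun j hj => ?_)
        rw [Finset.mem_range] at hj
        rw [smul_mulVec]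
        exact Submodule.smul_mem _ _ (ih j (by omega))
  have hK'top : K' = ⊤ := by
    rw [eq_top_iff, ← hspan, Submodule.span_le]
    rintro _ ⟨k, rfl⟩
    exact hmem k
  -- invertibility
  set C := Matrix.of fun a b : Fin n => ((A ^ (b : ℕ)) *ᵥ Pi.single s (1 : F)) a with hC
  have hrange : LinearMap.range C.mulVecLin = ⊤ := by
    rw [Matrix.range_mulVecLin]
    have : Set.range C.col = Set.range fun b : Fin n => (A ^ (b:ℕ)) *ᵥ Pi.single s (1 : F) := by
      rfl
    rw [this, ← hK', hK'top]
  have hsurj : Function.Surjective C.mulVecLin := LinearMap.range_eq_top.mp hrange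
  have hinj : Function.Injective C.mulVecLin := LinearMap.injective_iff_surjective.mpr hsurj
  have hdet : C.det ≠ 0 := by
    intro hdet
    obtain ⟨v, hv, hCv⟩ := Matrix.exists_mulVec_eq_zero_iff.mpr hdet
    apply hv
    apply hinj
    rw [Matrix.mulVecLin_apply, hCv, map_zero]
  rw [Matrix.isUnit_iff_isUnit_det]
  exact isUnit_iff_ne_zero.mpr hdet

/-- For a strongly connected directed graph `E` (with `E v u` meaning there is an edge
from `v` to `u`) with a self-loop at every vertex, over any field with at least `n + 1`
elements, there exists a matrix `A` consistent with the graph such that the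
controllability matrix `[e_s | A e_s | … | A^(n-1) e_s]` is invertible. -/
theorem exists_consistent_ctrlMat_isUnit {n : ℕ} {F : Type*} [Field F]
    [DecidableEq F]
    (hcard : Nonempty (Fin (n + 1) ↪ F))
    (E : Fin n → Fin n → Prop)
    (hconn : ∀ u v : Fin n, Relation.ReflTransGen E u v)
    (hloop : ∀ v : Fin n, E v v)
    (s : Fin n) :
    ∃ A : Matrix (Fin n) (Fin n) F,
      (∀ u v : Fin n, A u v ≠ 0 → E v u) ∧
      IsUnit (Matrix.of fun a b : Fin n =>
        ((A ^ (b : ℕ)) *ᵥ Pi.single s (1 : F)) a) := by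
  classical
  obtain ⟨depth, par, hds, hzero, hpar, hlt⟩ := exists_depth_par E s (hconn s)
  set emb := hcard.some with hemb
  set lam : Fin n → F := fun v => emb v.castSucc with hlamdef
  have hlam : Function.Injective lam :=
    fun a b hab => Fin.castSucc_injective n (emb.injective hab)
  set A : Matrix (Fin n) (Fin n) F :=
    Matrix.of (fun u v => if u = v then lam u else if u ≠ s ∧ par u = v then (1:F) else 0)
    with hAdef
  have hA : ∀ u v, A u v = if u = v then lam u else if u ≠ s ∧ par u = v then (1:F) else 0 :=
    fun u v => rfl
  refine ⟨A, ?_, ?_⟩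
  · -- consistency
    intro u v h
    rw [hA] at h
    by_cases huv : u = v
    · subst huv
      exact hloop u
    · rw [if_neg huv] at h
      by_cases hc : u ≠ s ∧ par u = v
      · have := (hpar u hc.1).1
        rwa [hc.2] at this
      · rw [if_neg hc] at h
        exact absurd rfl h
  · -- invertibility
    have hspan := key lam hlam s depth par hds hzero (fun v hv => (hpar v hv).2) hlt A hA
    exact ctrl_isUnit s A hspan
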